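/- Let ȳ ∈ P. Then the solution set on the coefficient polytope satisfies Y_c = (c ∘ e^{D^⊥}) ∩ P_> = (c ∘ e^{D^⊥}) ∩ (ȳ + ker A'), where c ∘ e^{D^⊥} = { c ∘ e^v : v ∈ D^⊥ } and D^⊥ is the orthogonal complement of D in ℝ^m. -/
import Mathlib


open Matrix

lemma prod_rpow_eq_iff {ι : Type*} [Fintype ι] (y c : ι → ℝ)
    (hy : ∀ j, 0 < y j) (hc : ∀ j, 0 < c j) (z : ι → ℝ) :
    (∏ j, y j ^ z j = ∏ j, c j ^ z j) ↔
      (fun j => Real.log (y j) - Real.log (c j)) ⬝ᵥ z = 0 := by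
  have h1 : (∏ j, y j ^ z j) = Real.exp (∑ j, Real.log (y j) * z j) := by
    rw [Real.exp_sum]
    exact Finset.prod_congr rfl fun j _ => Real.rpow_def_of_pos (hy j) (z j)
  have h2 : (∏ j, c j ^ z j) = Real.exp (∑ j, Real.log (c j) * z j) := by
    rw [Real.exp_sum]
    exact Finset.prod_congr rfl fun j _ => Real.rpow_def_of_pos (hc j) (z j)
  rw [h1, h2, Real.exp_eq_exp, dotProduct]
  simp only [sub_mul, Finset.sum_sub_distrib, sub_eq_zero]

/-- For `ȳ ∈ P`, the solution set on the coefficient polytope satisfies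
`Y_c = (c ∘ e^{D^⊥}) ∩ P_> = (c ∘ e^{D^⊥}) ∩ (ȳ + ker A')`, where `D = ker (B over J)`
and `A' = (A over J)`. -/
theorem stmt_5 {n n' l : ℕ} (mv : Fin l → ℕ) (hmv : ∀ i, 0 < mv i)
    (A : Matrix (Fin n') (Σ i : Fin l, Fin (mv i)) ℝ)
    (B : Matrix (Fin n) (Σ i : Fin l, Fin (mv i)) ℝ)
    (c : (Σ i : Fin l, Fin (mv i)) → ℝ) (hc : ∀ j, 0 < c j)
    (J : Matrix (Fin l) (Σ i : Fin l, Fin (mv i)) ℝ)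
    (hJ : ∀ (i j : Fin l) (a : Fin (mv j)), J i ⟨j, a⟩ = if j = i then 1 else 0)
    (ybar : (Σ i : Fin l, Fin (mv i)) → ℝ)
    (hybar : A.mulVec ybar = 0 ∧ (∀ j, 0 ≤ ybar j) ∧ J.mulVec ybar = 1) :
    ({y : (Σ i : Fin l, Fin (mv i)) → ℝ |
        (A.mulVec y = 0 ∧ (∀ j, 0 < y j) ∧ J.mulVec y = 1) ∧
        ∀ z : (Σ i : Fin l, Fin (mv i)) → ℝ,
          (Matrix.fromRows B J).mulVec z = 0 → ∏ j, y j ^ z j = ∏ j, c j ^ z j} =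
      {y : (Σ i : Fin l, Fin (mv i)) → ℝ |
        ∃ v : (Σ i : Fin l, Fin (mv i)) → ℝ,
          (∀ z : (Σ i : Fin l, Fin (mv i)) → ℝ,
            (Matrix.fromRows B J).mulVec z = 0 → v ⬝ᵥ z = 0) ∧
          y = fun j => c j * Real.exp (v j)} ∩
      {y : (Σ i : Fin l, Fin (mv i)) → ℝ |
        A.mulVec y = 0 ∧ (∀ j, 0 < y j) ∧ J.mulVec y = 1}) ∧
    ({y : (Σ i : Fin l, Fin (mv i)) → ℝ |
        (A.mulVec y = 0 ∧ (∀ j, 0 < y j) ∧ J.mulVec y = 1) ∧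
        ∀ z : (Σ i : Fin l, Fin (mv i)) → ℝ,
          (Matrix.fromRows B J).mulVec z = 0 → ∏ j, y j ^ z j = ∏ j, c j ^ z j} =
      {y : (Σ i : Fin l, Fin (mv i)) → ℝ |
        ∃ v : (Σ i : Fin l, Fin (mv i)) → ℝ,
          (∀ z : (Σ i : Fin l, Fin (mv i)) → ℝ,
            (Matrix.fromRows B J).mulVec z = 0 → v ⬝ᵥ z = 0) ∧
          y = fun j => c j * Real.exp (v j)} ∩
      {y : (Σ i : Fin l, Fin (mv i)) → ℝ |
        ∃ w, (Matrix.fromRows A J).mulVec w = 0 ∧ y = ybar + w}) := by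
  obtain ⟨hA, hpos, hJ1⟩ := hybar
  -- Y ⊆ E
  have YsubE : ∀ y : (Σ i : Fin l, Fin (mv i)) → ℝ,
      (A.mulVec y = 0 ∧ (∀ j, 0 < y j) ∧ J.mulVec y = 1) →
      (∀ z, (Matrix.fromRows B J).mulVec z = 0 → ∏ j, y j ^ z j = ∏ j, c j ^ z j) →
      ∃ v, (∀ z, (Matrix.fromRows B J).mulVec z = 0 → v ⬝ᵥ z = 0) ∧
        y = fun j => c j * Real.exp (v j) := by
    intro y hP hprod
    refine ⟨fun j => Real.log (y j) - Real.log (c j), fun z hz =>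
      (prod_rpow_eq_iff y c hP.2.1 hc z).mp (hprod z hz), ?_⟩
    funext j
    rw [Real.exp_sub, Real.exp_log (hP.2.1 j), Real.exp_log (hc j)]
    rw [mul_div_cancel₀ _ (ne_of_gt (hc j))]
  -- E members are positive and satisfy the product condition
  have Epos : ∀ v : (Σ i : Fin l, Fin (mv i)) → ℝ, ∀ j, 0 < c j * Real.exp (v j) :=
    fun v j => mul_pos (hc j) (Real.exp_pos _)
  have EtoProd : ∀ v : (Σ i : Fin l, Fin (mv i)) → ℝ,
      (∀ z, (Matrix.fromRows B J).mulVec z = 0 → v ⬝ᵥ z = 0) →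
      ∀ z, (Matrix.fromRows B J).mulVec z = 0 →
        ∏ j, (c j * Real.exp (v j)) ^ z j = ∏ j, c j ^ z j := by
    intro v hv z hz
    rw [prod_rpow_eq_iff _ c (Epos v) hc z]
    have : (fun j => Real.log (c j * Real.exp (v j)) - Real.log (c j)) = v := by
      funext j
      rw [Real.log_mul (ne_of_gt (hc j)) (Real.exp_ne_zero _), Real.log_exp]
      ring
    rw [this]
    exact hv z hz
  constructor
  · ext y
    simp only [Set.mem_setOf_eq, Set.mem_inter_iff]
    constructor
    · rintro ⟨hP, hprod⟩
      exact ⟨YsubE y hP hprod, hP⟩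
    · rintro ⟨⟨v, hv, rfl⟩, hP⟩
      exact ⟨hP, EtoProd v hv⟩
  · ext y
    simp only [Set.mem_setOf_eq, Set.mem_inter_iff]
    constructor
    · rintro ⟨hP, hprod⟩
      refine ⟨YsubE y hP hprod, y - ybar, ?_, by abel⟩
      rw [Matrix.fromRows_mulVec]
      funext i
      cases i with
      | inl i =>
        simp [Matrix.mulVec_sub, hP.1, hA]
      | inr i =>
        simp only [Sum.elim_inr, Matrix.mulVec_sub, hP.2.2, hJ1, Pi.zero_apply]
        simp
    · rintro ⟨⟨v, hv, rfl⟩, w, hw, hyw⟩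
      rw [Matrix.fromRows_mulVec] at hw
      have hAw : A.mulVec w = 0 := funext fun i => congrFun hw (Sum.inl i)
      have hJw : J.mulVec w = 0 := funext fun i => congrFun hw (Sum.inr i)
      have hP : A.mulVec (fun j => c j * Real.exp (v j)) = 0 ∧
          (∀ j, 0 < c j * Real.exp (v j)) ∧
          J.mulVec (fun j => c j * Real.exp (v j)) = 1 := by
        refine ⟨?_, Epos v, ?_⟩
        · rw [hyw, Matrix.mulVec_add, hA, hAw]; simp
        · rw [hyw, Matrix.mulVec_add, hJ1, hJw]; simp
      exact ⟨hP, EtoProd v hv⟩
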